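/- The ring Int(ℤ) of integer-valued polynomials is not a unique factorization domain. -/

import Mathlib

open Polynomial

/-- The ring of integer-valued polynomials Int(ℤ) ⊆ ℚ[x]. -/
noncomputable def IntValued : Subring (Polynomial ℚ) where
  carrier := {f | ∀ n : ℤ, ∃ m : ℤ, f.eval (n : ℚ) = (m : ℚ)}
  zero_mem' := fun n => ⟨0, by simp⟩
  one_mem' := fun n => ⟨1, by simp⟩
  add_mem' := by
    intro f g hf hg n
    obtain ⟨a, ha⟩ := hf n
    obtain ⟨b, hb⟩ := hg n
    exact ⟨a + b, by push_cast; rw [eval_add, ha, hb]⟩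
  mul_mem' := by
    intro f g hf hg n
    obtain ⟨a, ha⟩ := hf n
    obtain ⟨b, hb⟩ := hg n
    exact ⟨a * b, by push_cast; rw [eval_mul, ha, hb]⟩
  neg_mem' := by
    intro f hf n
    obtain ⟨a, ha⟩ := hf n
    exact ⟨-a, by push_cast; rw [eval_neg, ha]⟩

noncomputable def xI : IntValued := ⟨X, fun n => ⟨n, by simp⟩⟩

noncomputable def hI : IntValued :=
  ⟨C (1/2) * (X * (X - 1)), by
    intro n
    obtain ⟨k, hk⟩ := Int.even_mul_succ_self (n - 1)
    refine ⟨k, ?_⟩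
    have hk0 : (n - 1) * n = k + k := by simpa using hk
    have hk' : ((n : ℚ) - 1) * n = k + k := by exact_mod_cast congrArg (fun z : ℤ => (z : ℚ)) hk0
    simp only [eval_mul, eval_C, eval_X, eval_sub, eval_one]
    linarith⟩

lemma unit_of_const (a : IntValued) (m : ℤ) (hm : IsUnit m)
    (h : (a : ℚ[X]) = C (m : ℚ)) : IsUnit a := by
  rcases Int.isUnit_iff.mp hm with h1 | h1
  · have : a = 1 := Subtype.ext (by rw [h, h1]; norm_num)
    exact this ▸ isUnit_one
  · have : a = -1 := Subtype.ext (by rw [h, h1]; norm_num)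
    rw [this]
    exact IsUnit.neg isUnit_one

lemma two_irred : Irreducible (2 : IntValued) := by
  constructor
  · intro hu
    obtain ⟨g, hg⟩ := isUnit_iff_exists_inv.mp hu
    obtain ⟨m, hm⟩ := g.2 0
    rw [Int.cast_zero] at hm
    have := congrArg (fun f : IntValued => (f : ℚ[X]).eval 0) hg
    simp only [Subring.coe_mul, eval_mul, OneMemClass.coe_one, eval_one] at this
    rw [show ((2 : IntValued) : ℚ[X]) = 2 from rfl] at this
    simp only [eval_ofNat] at this
    rw [hm] at this
    have : (2 : ℤ) * m = 1 := by
      have h' : (2 : ℚ) * m = 1 := by simpa using this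
      exact_mod_cast h'
    omega
  · intro a b hab
    have hab' : (a : ℚ[X]) * (b : ℚ[X]) = 2 := by
      have := congrArg Subtype.val hab.symm
      rw [Subring.coe_mul] at this
      exact this
    have h2u : IsUnit ((2 : ℚ[X])) := by
      refine IsUnit.of_mul_eq_one (C (1/2)) ?_
      rw [show (2 : ℚ[X]) = C 2 by norm_cast, ← C_mul]
      norm_num
    rw [← hab'] at h2u
    obtain ⟨r, hr, hra⟩ := Polynomial.isUnit_iff.mp (isUnit_of_mul_isUnit_left h2u)
    obtain ⟨s, hs, hsb⟩ := Polynomial.isUnit_iff.mp (isUnit_of_mul_isUnit_right h2u)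
    obtain ⟨ma, hma⟩ := a.2 0
    obtain ⟨mb, hmb⟩ := b.2 0
    rw [Int.cast_zero] at hma hmb
    rw [← hra] at hma; rw [← hsb] at hmb
    simp only [eval_C] at hma hmb
    have hmul : ma * mb = 2 := by
      have h0 : ((a : ℚ[X]) * b).eval 0 = (2 : ℚ[X]).eval 0 := by rw [hab']
      rw [eval_mul, ← hra, ← hsb] at h0
      simp only [eval_C, eval_ofNat] at h0
      rw [hma, hmb] at h0
      have h0' : ((ma : ℚ) * mb) = (2 : ℚ) := by simpa using h0
      exact_mod_cast h0'
    rcases Int.prime_two.irreducible.isUnit_or_isUnit hmul.symm with h | h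
    · exact Or.inl (unit_of_const a ma h (by rw [← hra, hma]))
    · exact Or.inr (unit_of_const b mb h (by rw [← hsb, hmb]))

lemma two_dvd_prod : (2 : IntValued) ∣ xI * (xI - 1) := by
  refine ⟨hI, Subtype.ext ?_⟩
  show (X : ℚ[X]) * (X - 1) = 2 * (C (1/2) * (X * (X - 1)))
  rw [show (2 : ℚ[X]) = C 2 by norm_cast, ← mul_assoc, ← C_mul]
  norm_num

lemma two_not_dvd_xI : ¬ (2 : IntValued) ∣ xI := by
  rintro ⟨g, hg⟩
  obtain ⟨m, hm⟩ := g.2 1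
  rw [Int.cast_one] at hm
  have := congrArg (fun f : IntValued => (f : ℚ[X]).eval 1) hg
  simp only [Subring.coe_mul, eval_mul] at this
  rw [show ((2 : IntValued) : ℚ[X]) = 2 from rfl, show ((xI : IntValued) : ℚ[X]) = X from rfl] at this
  simp only [eval_ofNat, eval_X] at this
  rw [hm] at this
  have : (1 : ℤ) = 2 * m := by
    have h' : (1 : ℚ) = 2 * m := by simpa using this
    exact_mod_cast h'
  omega

lemma two_not_dvd_xI' : ¬ (2 : IntValued) ∣ (xI - 1) := by
  rintro ⟨g, hg⟩
  obtain ⟨m, hm⟩ := g.2 0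
  rw [Int.cast_zero] at hm
  have := congrArg (fun f : IntValued => (f : ℚ[X]).eval 0) hg
  rw [show ((xI - 1 : IntValued) : ℚ[X]) = X - 1 from rfl] at this
  simp only [Subring.coe_mul, eval_mul, eval_sub, eval_one] at this
  rw [show ((2 : IntValued) : ℚ[X]) = 2 from rfl] at this
  simp only [eval_ofNat, eval_X] at this
  rw [hm] at this
  have : (-1 : ℤ) = 2 * m := by
    have h' : (-1 : ℚ) = 2 * m := by simpa using this
    exact_mod_cast h'
  omega

theorem intValued_not_UFD : ¬ UniqueFactorizationMonoid IntValued := by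
  intro h
  haveI := h
  have hp : Prime (2 : IntValued) :=
    UniqueFactorizationMonoid.irreducible_iff_prime.mp two_irred
  rcases hp.2.2 _ _ two_dvd_prod with h | h
  · exact two_not_dvd_xI h
  · exact two_not_dvd_xI' h
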